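/- Let k ≥ 4 and let σ = ((m₁,n₁),…,(m_k,n_k)) be a k-tuple of pairs of nonzero integers with |m_i| < |n_i| for every i. For every i ∈ ℤ/kℤ, the group homomorphism from BS(m_i, n_i) to Hig_σ determined by sending t to a_{i−1} and a to a_i is injective. -/

import Mathlib

/-- The `i`-th defining relator `a_i a_{i+1}^{m_i} a_i⁻¹ (a_{i+1}^{n_i})⁻¹` of the generalized
Higman group, as an element of the free group on `ZMod k`. -/
def higRel (k : ℕ) (m n : ZMod k → ℤ) (i : ZMod k) : FreeGroup (ZMod k) :=
  FreeGroup.of i * FreeGroup.of (i + 1) ^ m i * (FreeGroup.of i)⁻¹ *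
    (FreeGroup.of (i + 1) ^ n i)⁻¹

/-- The generalized Higman group
`Hig_σ = ⟨a₁, …, a_k ∣ a_i a_{i+1}^{m_i} a_i⁻¹ = a_{i+1}^{n_i} (i ∈ ℤ/kℤ)⟩`. -/
abbrev Hig (k : ℕ) (m n : ZMod k → ℤ) : Type := PresentedGroup (Set.range (higRel k m n))

/-- The generator `a_i` of the generalized Higman group. -/
def Hig.gen (k : ℕ) (m n : ZMod k → ℤ) (i : ZMod k) : Hig k m n := PresentedGroup.of i
/-- The single defining relator `t a^m t⁻¹ (a^n)⁻¹` of the Baumslag–Solitar group `BS(m,n)`,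
as an element of the free group on `Bool`, where `false` stands for the generator `a` and
`true` for the generator `t`. -/
def bsRel (m n : ℤ) : FreeGroup Bool :=
  FreeGroup.of true * FreeGroup.of false ^ m * (FreeGroup.of true)⁻¹ *
    (FreeGroup.of false ^ n)⁻¹

/-- The Baumslag–Solitar group `BS(m,n) = ⟨a, t ∣ t a^m t⁻¹ = a^n⟩`. -/
abbrev BS (m n : ℤ) : Type := PresentedGroup ({bsRel m n} : Set (FreeGroup Bool))

/-- The generator `a` of `BS(m,n)`. -/
def BS.a (m n : ℤ) : BS m n := PresentedGroup.of false

/-- The generator `t` (stable letter) of `BS(m,n)`. -/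
def BS.t (m n : ℤ) : BS m n := PresentedGroup.of true

/-- For `k ≥ 4` and `σ` a `k`-tuple of pairs of nonzero integers with
`|m_i| < |n_i|`, for every `i ∈ ℤ/kℤ` the homomorphism from the Baumslag–Solitar group on the
pair of parameters attached to the edge `{a_i, a_{i+1}}`, determined by sending the stable
letter `t` to `a_i` and `a` to `a_{i+1}`, is injective. (With the indexing convention used
here for the relators of `Hig_σ`, the vertex group generated by `a_{i-1}` and `a_i` in the
paper corresponds, after the translation `i ↦ i+1` of the index, to the subgroup generated
by `a_i` and `a_{i+1}`, with `t ↦ a_i` and `a ↦ a_{i+1}`.) -/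
lemma PresentedGroup.mk_rel {α : Type*} {rels : Set (FreeGroup α)} {r : FreeGroup α}
    (h : r ∈ rels) : PresentedGroup.mk rels r = 1 :=
  (QuotientGroup.eq_one_iff _).2 (Subgroup.subset_normalClosure h)

namespace BS

variable (m n : ℤ)

lemma relation : t m n * a m n ^ m * (t m n)⁻¹ = a m n ^ n := by
  have h : PresentedGroup.mk {bsRel m n} (bsRel m n) = 1 := PresentedGroup.mk_rel rfl
  have h2 : t m n * a m n ^ m * (t m n)⁻¹ * (a m n ^ n)⁻¹ = 1 := by
    rw [← h]
    simp only [bsRel, map_mul, map_zpow, map_inv]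
    rfl
  rwa [mul_inv_eq_one] at h2

/-- the degree homomorphism: `t ↦ 1`, `a ↦ 0`. -/
def deg : BS m n →* Multiplicative ℤ :=
  PresentedGroup.toGroup (f := fun b => if b then Multiplicative.ofAdd 1 else 1)
    (by
      rintro r rfl
      simp [bsRel])

@[simp] lemma deg_t : deg m n (t m n) = Multiplicative.ofAdd 1 :=
  PresentedGroup.toGroup.of _

@[simp] lemma deg_a : deg m n (a m n) = 1 :=
  PresentedGroup.toGroup.of _

lemma t_zpow_eq_one {p : ℤ} (h : t m n ^ p = 1) : p = 0 := by
  have := congrArg (deg m n) h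
  simp only [map_zpow, deg_t, map_one] at this
  have : (p : ℤ) * 1 = 0 := by
    simpa [← ofAdd_zsmul] using congrArg Multiplicative.toAdd this
  omega

end BS

namespace BS

open Multiplicative Subgroup

/-- `ℤ ≃ ⟨ofAdd m⟩` for `m ≠ 0`. -/
noncomputable def genEquiv (m : ℤ) (hm : m ≠ 0) :
    Multiplicative ℤ ≃* Subgroup.zpowers (Multiplicative.ofAdd m) := by
  refine MulEquiv.ofBijective
    (zpowersHom _ (⟨ofAdd m, Subgroup.mem_zpowers _⟩ : zpowers (ofAdd m))) ⟨?_, ?_⟩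
  · intro x y hxy
    have h : (ofAdd m) ^ (Multiplicative.toAdd x) = (ofAdd m) ^ (Multiplicative.toAdd y) := by
      have := congrArg (fun s : zpowers (ofAdd m) => (s : Multiplicative ℤ)) hxy
      simpa [zpowersHom_apply, SubgroupClass.coe_zpow] using this
    have h2 : Multiplicative.toAdd x • m = Multiplicative.toAdd y • m := by
      simpa [← ofAdd_zsmul] using congrArg (fun z : Multiplicative ℤ => Multiplicative.toAdd z) h
    simp only [smul_eq_mul] at h2
    exact Multiplicative.toAdd.injective (mul_right_cancel₀ hm h2)
  · rintro ⟨x, hx⟩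
    obtain ⟨c, hc⟩ := Subgroup.mem_zpowers_iff.mp hx
    exact ⟨ofAdd c, Subtype.ext (by simpa [SubgroupClass.coe_zpow] using hc)⟩

@[simp] lemma genEquiv_apply (m : ℤ) (hm : m ≠ 0) (z : ℤ) :
    genEquiv m hm (ofAdd z) = ⟨ofAdd m, Subgroup.mem_zpowers _⟩ ^ z := by
  rw [genEquiv]
  exact zpowersHom_apply (zpowers (ofAdd m)) _ (ofAdd z)

/-- the isomorphism `⟨ofAdd m⟩ ≃ ⟨ofAdd n⟩`. -/
noncomputable def bsφ (m n : ℤ) (hm : m ≠ 0) (hn : n ≠ 0) :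
    (zpowers (ofAdd m) : Subgroup (Multiplicative ℤ)) ≃* zpowers (ofAdd n) :=
  (genEquiv m hm).symm.trans (genEquiv n hn)

lemma bsφ_gen (m n : ℤ) (hm : m ≠ 0) (hn : n ≠ 0) :
    (bsφ m n hm hn ⟨ofAdd m, Subgroup.mem_zpowers _⟩ : Multiplicative ℤ) = ofAdd n := by
  have h1 : genEquiv m hm (ofAdd 1) = ⟨ofAdd m, Subgroup.mem_zpowers _⟩ := by
    simp
  have : (genEquiv m hm).symm ⟨ofAdd m, Subgroup.mem_zpowers _⟩ = ofAdd 1 := by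
    rw [← h1, MulEquiv.symm_apply_apply]
  rw [bsφ, MulEquiv.trans_apply, this]
  simp

/-- The map to the HNN extension realizing `BS m n`. -/
noncomputable def toHNN (m n : ℤ) (hm : m ≠ 0) (hn : n ≠ 0) :
    BS m n →* HNNExtension (Multiplicative ℤ) _ _ (bsφ m n hm hn) :=
  PresentedGroup.toGroup
    (f := fun b => if b then HNNExtension.t else HNNExtension.of (ofAdd 1))
    (by
      rintro r rfl
      rw [show bsRel m n = FreeGroup.of true * FreeGroup.of false ^ m *
        (FreeGroup.of true)⁻¹ * (FreeGroup.of false ^ n)⁻¹ from rfl]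
      simp only [map_mul, map_zpow, map_inv, FreeGroup.lift_apply_of, eq_self_iff_true, if_true,
        Bool.false_eq_true, if_false]
      have hm' : (HNNExtension.of (G := Multiplicative ℤ) (A := zpowers (ofAdd m))
          (B := zpowers (ofAdd n)) (φ := bsφ m n hm hn) (ofAdd 1)) ^ m
          = HNNExtension.of (ofAdd m) := by
        rw [← map_zpow]
        congr 1
        simp [← ofAdd_zsmul, smul_eq_mul]
      have hn' : (HNNExtension.of (G := Multiplicative ℤ) (A := zpowers (ofAdd m))
          (B := zpowers (ofAdd n)) (φ := bsφ m n hm hn) (ofAdd 1)) ^ n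
          = HNNExtension.of (ofAdd n) := by
        rw [← map_zpow]
        congr 1
        simp [← ofAdd_zsmul, smul_eq_mul]
      rw [hm', hn']
      have h := (HNNExtension.equiv_eq_conj (φ := bsφ m n hm hn)
        ⟨ofAdd m, Subgroup.mem_zpowers _⟩).symm
      rw [bsφ_gen] at h
      have h' : HNNExtension.t * HNNExtension.of (ofAdd m) * HNNExtension.t⁻¹
          = HNNExtension.of (G := Multiplicative ℤ) (ofAdd n) := h
      rw [h', mul_inv_cancel])

lemma a_zpow_eq_one (m n : ℤ) (hm : m ≠ 0) (hn : n ≠ 0) {p : ℤ}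
    (h : a m n ^ p = 1) : p = 0 := by
  have ha : toHNN m n hm hn (a m n) = HNNExtension.of (ofAdd 1) :=
    PresentedGroup.toGroup.of _
  have h2 : toHNN m n hm hn (a m n ^ p) = 1 := by rw [h, map_one]
  rw [map_zpow, ha, ← map_zpow] at h2
  have h3 : (Multiplicative.ofAdd (1:ℤ)) ^ p = 1 := by
    apply HNNExtension.of_injective (φ := bsφ m n hm hn)
    rw [h2, map_one]
  have h4 : p • (1:ℤ) = 0 := by
    simpa [← ofAdd_zsmul] using congrArg (fun z : Multiplicative ℤ => Multiplicative.toAdd z) h3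
  simpa using h4

lemma a_zpow_mem_t (m n : ℤ) (hm : m ≠ 0) (hn : n ≠ 0) {p : ℤ}
    (h : a m n ^ p ∈ zpowers (t m n)) : p = 0 := by
  obtain ⟨q, hq⟩ := Subgroup.mem_zpowers_iff.mp h
  have hdeg := congrArg (deg m n) hq
  simp only [map_zpow, deg_t, deg_a, one_zpow] at hdeg
  have hq0 : q = 0 := by
    have : q * 1 = 0 := by
      simpa [← ofAdd_zsmul, smul_eq_mul] using congrArg Multiplicative.toAdd hdeg
    omega
  rw [hq0, zpow_zero] at hq
  exact a_zpow_eq_one m n hm hn hq.symm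

lemma t_zpow_mem_a (m n : ℤ) {p : ℤ}
    (h : t m n ^ p ∈ zpowers (a m n)) : p = 0 := by
  obtain ⟨q, hq⟩ := Subgroup.mem_zpowers_iff.mp h
  have hdeg := congrArg (deg m n) hq
  simp only [map_zpow, deg_t, deg_a, one_zpow] at hdeg
  have : p * 1 = 0 := by
    simpa [← ofAdd_zsmul, smul_eq_mul] using congrArg Multiplicative.toAdd hdeg.symm
  omega

end BS

open Monoid Multiplicative Subgroup

lemma zpowersHom_injective' {G : Type*} [Group G] {g : G}
    (h : ∀ p : ℤ, g ^ p = 1 → p = 0) : Function.Injective (zpowersHom G g) := by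
  rw [injective_iff_map_eq_one]
  intro x hx
  have := h (Multiplicative.toAdd x) (by simpa [zpowersHom_apply] using hx)
  exact Multiplicative.toAdd.injective this

/-- A "chain group" package: the amalgam of Baumslag-Solitar groups
`BS (M 0) (N 0), …, BS (M s) (N s)` along a path, together with its vertex generators and
the facts needed for the induction. -/
structure HPack (M N : ℕ → ℤ) (s : ℕ) where
  G : Type
  [grp : Group G]
  gen : ℕ → G
  rel : ∀ j, j ≤ s → gen j * gen (j+1) ^ M j * (gen j)⁻¹ = gen (j+1) ^ N j
  gen0inj : ∀ c : ℤ, gen 0 ^ c = 1 → c = 0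
  gen0mem : ∀ c : ℤ, gen 0 ^ c ∈ Subgroup.zpowers (gen (s+1)) → c = 0
  lastinj : ∀ p : ℤ, gen (s+1) ^ p = 1 → p = 0

attribute [instance] HPack.grp

namespace HPack

variable {M N : ℕ → ℤ}

/-- the two factors of the next pushout step. -/
abbrev stepFam (M N : ℕ → ℤ) (s : ℕ) (P : HPack M N s) (b : Bool) : Type :=
  match b with
  | false => P.G
  | true => BS (M (s+1)) (N (s+1))

instance (s : ℕ) (P : HPack M N s) (b : Bool) : Group (stepFam M N s P b) :=
  match b with
  | false => inferInstanceAs (Group P.G)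
  | true => inferInstanceAs (Group (BS (M (s+1)) (N (s+1))))

/-- the edge maps of the next pushout step. -/
def stepφ (M N : ℕ → ℤ) (s : ℕ) (P : HPack M N s) (b : Bool) :
    Multiplicative ℤ →* stepFam M N s P b :=
  match b with
  | false => zpowersHom _ (P.gen (s+1))
  | true => zpowersHom _ (BS.t (M (s+1)) (N (s+1)))

lemma stepφ_injective (s : ℕ) (P : HPack M N s) (b : Bool) :
    Function.Injective (stepφ M N s P b) := by
  cases b with
  | false => exact zpowersHom_injective' P.lastinj
  | true => exact zpowersHom_injective' (fun p hp => BS.t_zpow_eq_one _ _ hp)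

/-- the carrier of the next step. -/
abbrev StepG (s : ℕ) (P : HPack M N s) : Type := PushoutI (stepφ M N s P)

/-- generators of the next step. -/
def stepGen (s : ℕ) (P : HPack M N s) (j : ℕ) : StepG s P :=
  if j ≤ s + 1 then PushoutI.of (φ := stepφ M N s P) false (P.gen j)
  else PushoutI.of (φ := stepφ M N s P) true (BS.a (M (s+1)) (N (s+1)))

lemma stepGen_le (s : ℕ) (P : HPack M N s) {j : ℕ} (hj : j ≤ s + 1) :
    stepGen s P j = PushoutI.of (φ := stepφ M N s P) false (P.gen j) := if_pos hj

lemma stepGen_gt (s : ℕ) (P : HPack M N s) {j : ℕ} (hj : s + 1 < j) :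
    stepGen s P j = PushoutI.of (φ := stepφ M N s P) true (BS.a (M (s+1)) (N (s+1))) :=
  if_neg (by omega)

/-- the key amalgamation identity. -/
lemma stepGen_glue (s : ℕ) (P : HPack M N s) :
    stepGen s P (s+1) = PushoutI.of (φ := stepφ M N s P) true (BS.t (M (s+1)) (N (s+1))) := by
  rw [stepGen_le s P le_rfl]
  have h1 : P.gen (s+1) = stepφ M N s P false (ofAdd 1) := by
    simp [stepφ, zpowersHom_apply]
  have h2 : BS.t (M (s+1)) (N (s+1)) = stepφ M N s P true (ofAdd 1) := by
    simp [stepφ, zpowersHom_apply]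
  rw [h1, h2, PushoutI.of_apply_eq_base, PushoutI.of_apply_eq_base]

/-- The pushout step: add one more Baumslag-Solitar group to the chain. -/
def step (hM : ∀ j, M j ≠ 0) (hN : ∀ j, N j ≠ 0) {s : ℕ} (P : HPack M N s) :
    HPack M N (s+1) where
  G := StepG s P
  gen := stepGen s P
  rel := by
    intro j hj
    rcases Nat.lt_or_ge j (s+1) with h | h
    · rw [stepGen_le s P (by omega), stepGen_le s P (by omega : j + 1 ≤ s + 1)]
      have := congrArg (PushoutI.of (φ := stepφ M N s P) false) (P.rel j (by omega))
      simpa [map_mul, map_zpow, map_inv] using this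
    · have hj1 : j = s + 1 := by omega
      subst hj1
      rw [stepGen_glue s P, stepGen_gt s P (by omega)]
      have := congrArg (PushoutI.of (φ := stepφ M N s P) true)
        (BS.relation (M (s+1)) (N (s+1)))
      simpa [map_mul, map_zpow, map_inv] using this
  gen0inj := by
    intro c hc
    rw [stepGen_le s P (by omega), ← map_zpow] at hc
    have h1 : P.gen 0 ^ c = 1 :=
      PushoutI.of_injective (stepφ_injective s P) false (by rw [hc, map_one])
    exact P.gen0inj c h1
  gen0mem := by
    intro c hc
    obtain ⟨q, hq⟩ := Subgroup.mem_zpowers_iff.mp hc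
    rw [stepGen_gt s P (j := s + 1 + 1) (by omega), stepGen_le s P (j := 0) (by omega),
      ← map_zpow, ← map_zpow] at hq
    have hmem : PushoutI.of (φ := stepφ M N s P) false (P.gen 0 ^ c) ∈
        (PushoutI.base (stepφ M N s P)).range := by
      rw [← PushoutI.inf_of_range_eq_base_range (stepφ_injective s P)
        (show (false : Bool) ≠ true by simp)]
      exact ⟨⟨P.gen 0 ^ c, rfl⟩, ⟨BS.a (M (s+1)) (N (s+1)) ^ q, hq⟩⟩
    obtain ⟨h, hh⟩ := hmem
    have hbase : PushoutI.base (stepφ M N s P) h =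
        PushoutI.of (φ := stepφ M N s P) false (stepφ M N s P false h) :=
      (PushoutI.of_apply_eq_base (stepφ M N s P) false h).symm
    rw [hbase] at hh
    have h1 : stepφ M N s P false h = P.gen 0 ^ c :=
      PushoutI.of_injective (stepφ_injective s P) false hh
    refine P.gen0mem c ?_
    rw [← h1]
    exact ⟨Multiplicative.toAdd h, rfl⟩
  lastinj := by
    intro p hp
    rw [stepGen_gt s P (by omega), ← map_zpow] at hp
    have h1 : BS.a (M (s+1)) (N (s+1)) ^ p = 1 :=
      PushoutI.of_injective (stepφ_injective s P) true (by rw [hp, map_one])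
    exact BS.a_zpow_eq_one _ _ (hM (s+1)) (hN (s+1)) h1

/-- The base chain: a single Baumslag-Solitar group. -/
def base (hM : ∀ j, M j ≠ 0) (hN : ∀ j, N j ≠ 0) : HPack M N 0 where
  G := BS (M 0) (N 0)
  gen := fun j => if j = 0 then BS.t (M 0) (N 0) else BS.a (M 0) (N 0)
  rel := by
    intro j hj
    have : j = 0 := by omega
    subst this
    simpa using BS.relation (M 0) (N 0)
  gen0inj := by
    intro c hc
    simp only [if_pos rfl] at hc
    exact BS.t_zpow_eq_one _ _ hc
  gen0mem := by
    intro c hc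
    simp only [if_pos rfl, Nat.one_ne_zero, if_false] at hc
    exact BS.t_zpow_mem_a _ _ hc
  lastinj := by
    intro p hp
    change BS.a (M 0) (N 0) ^ p = 1 at hp
    exact BS.a_zpow_eq_one _ _ (hM 0) (hN 0) hp

/-- The chain of `s+1` Baumslag-Solitar groups. -/
def pack (M N : ℕ → ℤ) (hM : ∀ j, M j ≠ 0) (hN : ∀ j, N j ≠ 0) : ∀ s : ℕ, HPack M N s
  | 0 => base hM hN
  | s+1 => step hM hN (pack M N hM hN s)

end HPack

namespace HPack

variable {M N : ℕ → ℤ}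

/-- The two endpoints of the next chain, as a `Bool`-indexed family. -/
def ends (s : ℕ) (P : HPack M N s) (b : Bool) : StepG s P :=
  match b with
  | false => stepGen s P 0
  | true => stepGen s P (s+2)

/-- The endpoint letters inside the factors of the pushout. -/
def endLetter (s : ℕ) (P : HPack M N s) (b : Bool) (z : Multiplicative ℤ) :
    stepFam M N s P b :=
  match b with
  | false => P.gen 0 ^ Multiplicative.toAdd z
  | true => BS.a (M (s+1)) (N (s+1)) ^ Multiplicative.toAdd z

lemma of_endLetter (s : ℕ) (P : HPack M N s) (b : Bool) (z : Multiplicative ℤ) :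
    PushoutI.of (φ := stepφ M N s P) b (endLetter s P b z) = ends s P b ^ Multiplicative.toAdd z := by
  cases b with
  | false =>
    show PushoutI.of (φ := stepφ M N s P) false (P.gen 0 ^ Multiplicative.toAdd z)
      = stepGen s P 0 ^ Multiplicative.toAdd z
    rw [map_zpow, stepGen_le s P (by omega)]
  | true =>
    show PushoutI.of (φ := stepφ M N s P) true
        (BS.a (M (s+1)) (N (s+1)) ^ Multiplicative.toAdd z)
      = stepGen s P (s+2) ^ Multiplicative.toAdd z
    rw [map_zpow, stepGen_gt s P (by omega)]

lemma endLetter_ne_one (hM : ∀ j, M j ≠ 0) (hN : ∀ j, N j ≠ 0) (s : ℕ) (P : HPack M N s)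
    (b : Bool) {z : Multiplicative ℤ} (hz : z ≠ 1) : endLetter s P b z ≠ 1 := by
  have hz' : Multiplicative.toAdd z ≠ 0 := by
    intro h0
    exact hz (Multiplicative.toAdd.injective (by simpa using h0))
  cases b with
  | false =>
    intro h
    exact hz' (P.gen0inj _ h)
  | true =>
    intro h
    exact hz' (BS.a_zpow_eq_one _ _ (hM (s+1)) (hN (s+1)) h)

lemma endLetter_not_mem_range (hM : ∀ j, M j ≠ 0) (hN : ∀ j, N j ≠ 0) (s : ℕ)
    (P : HPack M N s) (b : Bool) {z : Multiplicative ℤ} (hz : z ≠ 1) :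
    endLetter s P b z ∉ (stepφ M N s P b).range := by
  have hz' : Multiplicative.toAdd z ≠ 0 := by
    intro h0
    exact hz (Multiplicative.toAdd.injective (by simpa using h0))
  cases b with
  | false =>
    rintro ⟨y, hy⟩
    refine hz' (P.gen0mem (Multiplicative.toAdd z) ?_)
    refine Subgroup.mem_zpowers_iff.mpr ⟨Multiplicative.toAdd y, ?_⟩
    exact hy
  | true =>
    rintro ⟨y, hy⟩
    refine hz' (BS.a_zpow_mem_t _ _ (hM (s+1)) (hN (s+1)) (p := Multiplicative.toAdd z) ?_)
    refine Subgroup.mem_zpowers_iff.mpr ⟨Multiplicative.toAdd y, ?_⟩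
    exact hy

/-- Key freeness result: the two ends of a chain of at least two Baumslag-Solitar groups
generate a free group of rank 2. -/
theorem step_free (hM : ∀ j, M j ≠ 0) (hN : ∀ j, N j ≠ 0) {s : ℕ} (P : HPack M N s) :
    Function.Injective
      (CoprodI.lift (fun b : Bool => zpowersHom _ (ends s P b)) :
        CoprodI (fun _ : Bool => Multiplicative ℤ) →* StepG s P) := by
  set κ := (CoprodI.lift (fun b : Bool => zpowersHom _ (ends s P b)) :
        CoprodI (fun _ : Bool => Multiplicative ℤ) →* StepG s P) with hκ
  rw [injective_iff_map_eq_one]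
  intro w hw
  set W := CoprodI.Word.equiv (M := fun _ : Bool => Multiplicative ℤ) w with hWdef
  have hWp : W.prod = w := CoprodI.Word.equiv.symm_apply_apply w
  -- build the corresponding word in the pushout
  set W' : CoprodI.Word (stepFam M N s P) :=
    { toList := W.toList.map (fun l => ⟨l.1, endLetter s P l.1 l.2⟩)
      ne_one := by
        rintro l' hl'
        rw [List.mem_map] at hl'
        obtain ⟨l, hl, rfl⟩ := hl'
        exact endLetter_ne_one hM hN s P l.1 (W.ne_one l hl)
      chain_ne := by
        rw [List.isChain_map]
        exact W.chain_ne } with hW'def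
  have hred : PushoutI.Reduced (stepφ M N s P) W' := by
    rintro l' hl'
    rw [hW'def] at hl'
    simp only [List.mem_map] at hl'
    obtain ⟨l, hl, rfl⟩ := hl'
    exact endLetter_not_mem_range hM hN s P l.1 (W.ne_one l hl)
  have hprod : PushoutI.ofCoprodI (W'.prod) = κ w := by
    rw [← hWp, hW'def]
    rw [CoprodI.Word.prod, CoprodI.Word.prod, map_list_prod, map_list_prod]
    simp only [List.map_map]
    congr 1
    refine List.map_congr_left ?_
    rintro ⟨b, z⟩ _
    simp only [Function.comp_apply]
    rw [PushoutI.ofCoprodI_of, of_endLetter, hκ, CoprodI.lift_of, zpowersHom_apply]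
  have hempty : W' = CoprodI.Word.empty := by
    refine PushoutI.Reduced.eq_empty_of_mem_range (stepφ_injective s P) hred ?_
    rw [hprod, hw]
    exact ⟨1, map_one _⟩
  have hnil : W.toList = [] := by
    have := congrArg CoprodI.Word.toList hempty
    rw [hW'def] at this
    simpa using this
  rw [← hWp, CoprodI.Word.prod, hnil]
  simp

end HPack


section Assembly

open HPack Monoid

namespace HigAux

variable (k : ℕ) (m n : ZMod k → ℤ)
  (hm : ∀ i, m i ≠ 0) (hn : ∀ i, n i ≠ 0) (i : ZMod k)

/-- parameters along the arc starting at `i`. -/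
def MA (r : ℕ) : ℤ := m (i + (r : ZMod k))
/-- parameters along the arc starting at `i`. -/
def NA (r : ℕ) : ℤ := n (i + (r : ZMod k))
/-- parameters along the arc starting at `i+2`. -/
def MB (r : ℕ) : ℤ := m (i + 2 + (r : ZMod k))
/-- parameters along the arc starting at `i+2`. -/
def NB (r : ℕ) : ℤ := n (i + 2 + (r : ZMod k))

/-- the bottom of the first arc. -/
noncomputable def PA : HPack (MA k m i) (NA k n i) 0 :=
  HPack.base (fun _ => hm _) (fun _ => hn _)

/-- the second arc minus its last group. -/
noncomputable def PB : HPack (MB k m i) (NB k n i) (k - 4) :=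
  HPack.pack _ _ (fun _ => hm _) (fun _ => hn _) (k - 4)

/-- the first arc: the chain on `a_i, a_{i+1}, a_{i+2}`. -/
noncomputable def Aarc : HPack (MA k m i) (NA k n i) 1 :=
  HPack.step (fun _ => hm _) (fun _ => hn _) (PA k m n hm hn i)

/-- the second arc: the chain on `a_{i+2}, …, a_{i+k}`. -/
noncomputable def Barc : HPack (MB k m i) (NB k n i) (k - 4 + 1) :=
  HPack.step (fun _ => hm _) (fun _ => hn _) (PB k m n hm hn i)

/-- the free group of rank two, as a coproduct of two copies of `ℤ`. -/
abbrev F2 : Type := Monoid.CoprodI (fun _ : Bool => Multiplicative ℤ)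

/-- the swap automorphism of `F2` as a hom. -/
def F2swap : F2 →* F2 :=
  Monoid.CoprodI.lift (fun b => (Monoid.CoprodI.of
    (M := fun _ : Bool => Multiplicative ℤ) (i := !b)))

lemma F2swap_swap : (F2swap.comp F2swap) = MonoidHom.id F2 := by
  refine Monoid.CoprodI.ext_hom _ _ (fun b => ?_)
  ext x
  simp [F2swap, Monoid.CoprodI.lift_of]

lemma F2swap_injective : Function.Injective F2swap := by
  have h : Function.LeftInverse F2swap F2swap := fun x => by
    have := congrArg (fun ψ : F2 →* F2 => ψ x) F2swap_swap
    simpa using this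
  exact h.injective

/-- the two factor groups of the final amalgam. -/
noncomputable def Gfam : Bool → Type :=
  fun b => match b with
  | false => (Aarc k m n hm hn i).G
  | true => (Barc k m n hm hn i).G

noncomputable instance (b : Bool) : Group (Gfam k m n hm hn i b) :=
  match b with
  | false => inferInstanceAs (Group (Aarc k m n hm hn i).G)
  | true => inferInstanceAs (Group (Barc k m n hm hn i).G)

/-- the edge maps of the final amalgam. -/
noncomputable def Φ (b : Bool) : F2 →* Gfam k m n hm hn i b :=
  match b with
  | false => Monoid.CoprodI.lift
      (fun b' => zpowersHom _ (HPack.ends 0 (PA k m n hm hn i) b'))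
  | true => (Monoid.CoprodI.lift
      (fun b' => zpowersHom _ (HPack.ends (k - 4) (PB k m n hm hn i) b'))).comp F2swap

lemma Φ_injective (b : Bool) : Function.Injective (Φ k m n hm hn i b) := by
  cases b with
  | false => exact HPack.step_free (fun _ => hm _) (fun _ => hn _) (PA k m n hm hn i)
  | true => exact (HPack.step_free (fun _ => hm _) (fun _ => hn _)
      (PB k m n hm hn i)).comp F2swap_injective

/-- the total group: amalgam of the two arcs over the free group of rank 2. -/
noncomputable def Gtot : Type := Monoid.PushoutI (Φ k m n hm hn i)

noncomputable instance : Group (Gtot k m n hm hn i) :=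
  inferInstanceAs (Group (Monoid.PushoutI _))

noncomputable def ofA : (Aarc k m n hm hn i).G →* Gtot k m n hm hn i :=
  Monoid.PushoutI.of (φ := Φ k m n hm hn i) false

noncomputable def ofB : (Barc k m n hm hn i).G →* Gtot k m n hm hn i :=
  Monoid.PushoutI.of (φ := Φ k m n hm hn i) true

lemma ofA_injective : Function.Injective (ofA k m n hm hn i) :=
  Monoid.PushoutI.of_injective (Φ_injective k m n hm hn i) false

lemma glue (b : Bool) :
    ofA k m n hm hn i (HPack.ends 0 (PA k m n hm hn i) b) =
      ofB k m n hm hn i (HPack.ends (k - 4) (PB k m n hm hn i) (!b)) := by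
  have h1 : ofA k m n hm hn i (HPack.ends 0 (PA k m n hm hn i) b)
      = Monoid.PushoutI.base (Φ k m n hm hn i)
        (Monoid.CoprodI.of (M := fun _ : Bool => Multiplicative ℤ) (i := b)
          (Multiplicative.ofAdd 1)) := by
    rw [← Monoid.PushoutI.of_apply_eq_base (Φ k m n hm hn i) false]
    show ofA k m n hm hn i (HPack.ends 0 (PA k m n hm hn i) b)
      = ofA k m n hm hn i ((Monoid.CoprodI.lift
          (fun b' => zpowersHom _ (HPack.ends 0 (PA k m n hm hn i) b')))
        (Monoid.CoprodI.of (Multiplicative.ofAdd 1)))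
    rw [Monoid.CoprodI.lift_of, zpowersHom_apply, toAdd_ofAdd, zpow_one]
  have h2 : ofB k m n hm hn i (HPack.ends (k - 4) (PB k m n hm hn i) (!b))
      = Monoid.PushoutI.base (Φ k m n hm hn i)
        (Monoid.CoprodI.of (M := fun _ : Bool => Multiplicative ℤ) (i := b)
          (Multiplicative.ofAdd 1)) := by
    rw [← Monoid.PushoutI.of_apply_eq_base (Φ k m n hm hn i) true]
    show ofB k m n hm hn i (HPack.ends (k - 4) (PB k m n hm hn i) (!b))
      = ofB k m n hm hn i (((Monoid.CoprodI.lift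
          (fun b' => zpowersHom _ (HPack.ends (k - 4) (PB k m n hm hn i) b'))).comp F2swap)
        (Monoid.CoprodI.of (Multiplicative.ofAdd 1)))
    rw [MonoidHom.comp_apply]
    rw [show F2swap (Monoid.CoprodI.of (M := fun _ : Bool => Multiplicative ℤ) (i := b)
        (Multiplicative.ofAdd 1))
      = Monoid.CoprodI.of (M := fun _ : Bool => Multiplicative ℤ) (i := !b)
        (Multiplicative.ofAdd 1) from by rw [F2swap, Monoid.CoprodI.lift_of]]
    rw [Monoid.CoprodI.lift_of, zpowersHom_apply, toAdd_ofAdd, zpow_one]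
  rw [h1, h2]

lemma MA0_eq : MA k m i 0 = m i := by simp [MA]
lemma NA0_eq : NA k n i 0 = n i := by simp [NA]

/-- translation between the two presentations of the same BS group. -/
noncomputable def eBS : BS (m i) (n i) →* BS (MA k m i 0) (NA k n i 0) :=
  PresentedGroup.toGroup
    (f := fun b => if b then BS.t (MA k m i 0) (NA k n i 0) else BS.a (MA k m i 0) (NA k n i 0))
    (by
      rintro r hr
      rw [Set.mem_singleton_iff] at hr
      subst hr
      rw [show bsRel (m i) (n i) = FreeGroup.of true * FreeGroup.of false ^ (m i) *
        (FreeGroup.of true)⁻¹ * (FreeGroup.of false ^ (n i))⁻¹ from rfl]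
      simp only [map_mul, map_zpow, map_inv, FreeGroup.lift_apply_of, eq_self_iff_true, if_true,
        Bool.false_eq_true, if_false]
      rw [← MA0_eq k m i, ← NA0_eq k n i, mul_inv_eq_one]
      exact BS.relation _ _)

/-- translation between the two presentations of the same BS group. -/
noncomputable def eBS' : BS (MA k m i 0) (NA k n i 0) →* BS (m i) (n i) :=
  PresentedGroup.toGroup
    (f := fun b => if b then BS.t (m i) (n i) else BS.a (m i) (n i))
    (by
      rintro r hr
      rw [Set.mem_singleton_iff] at hr
      subst hr
      rw [show bsRel (MA k m i 0) (NA k n i 0) = FreeGroup.of true *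
        FreeGroup.of false ^ (MA k m i 0) *
        (FreeGroup.of true)⁻¹ * (FreeGroup.of false ^ (NA k n i 0))⁻¹ from rfl]
      simp only [map_mul, map_zpow, map_inv, FreeGroup.lift_apply_of, eq_self_iff_true, if_true,
        Bool.false_eq_true, if_false]
      rw [MA0_eq k m i, NA0_eq k n i, mul_inv_eq_one]
      exact BS.relation _ _)

@[simp] lemma eBS_t : eBS k m n i (BS.t (m i) (n i)) = BS.t (MA k m i 0) (NA k n i 0) :=
  PresentedGroup.toGroup.of _

@[simp] lemma eBS_a : eBS k m n i (BS.a (m i) (n i)) = BS.a (MA k m i 0) (NA k n i 0) :=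
  PresentedGroup.toGroup.of _

lemma eBS_injective : Function.Injective (eBS k m n i) := by
  have hid : (eBS' k m n i).comp (eBS k m n i) = MonoidHom.id _ := by
    refine PresentedGroup.ext (fun b => ?_)
    cases b with
    | false =>
      show eBS' k m n i (eBS k m n i (BS.a (m i) (n i))) = BS.a (m i) (n i)
      rw [eBS_a]
      exact PresentedGroup.toGroup.of _
    | true =>
      show eBS' k m n i (eBS k m n i (BS.t (m i) (n i))) = BS.t (m i) (n i)
      rw [eBS_t]
      exact PresentedGroup.toGroup.of _
  have h : Function.LeftInverse (eBS' k m n i) (eBS k m n i) := fun x => by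
    have := congrArg (fun ψ : BS (m i) (n i) →* BS (m i) (n i) => ψ x) hid
    simpa using this
  exact h.injective

/-- the inclusion of the bottom BS group into the first arc. -/
noncomputable def embA : BS (MA k m i 0) (NA k n i 0) →* (Aarc k m n hm hn i).G :=
  Monoid.PushoutI.of (φ := HPack.stepφ (MA k m i) (NA k n i) 0 (PA k m n hm hn i)) false

lemma embA_injective : Function.Injective (embA k m n hm hn i) :=
  Monoid.PushoutI.of_injective (HPack.stepφ_injective 0 (PA k m n hm hn i)) false

/-- the embedding of `BS (m i) (n i)` into the total group. -/
noncomputable def ι : BS (m i) (n i) →* Gtot k m n hm hn i :=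
  ((ofA k m n hm hn i).comp (embA k m n hm hn i)).comp (eBS k m n i)

lemma ι_injective : Function.Injective (ι k m n hm hn i) :=
  (ofA_injective k m n hm hn i).comp ((embA_injective k m n hm hn i).comp
    (eBS_injective k m n i))

lemma genA_zero :
    (Aarc k m n hm hn i).gen 0 = embA k m n hm hn i (BS.t (MA k m i 0) (NA k n i 0)) := by
  show HPack.stepGen 0 (PA k m n hm hn i) 0 = _
  rw [HPack.stepGen_le 0 (PA k m n hm hn i) (by omega)]
  rfl

lemma genA_one :
    (Aarc k m n hm hn i).gen 1 = embA k m n hm hn i (BS.a (MA k m i 0) (NA k n i 0)) := by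
  show HPack.stepGen 0 (PA k m n hm hn i) 1 = _
  rw [HPack.stepGen_le 0 (PA k m n hm hn i) (by omega)]
  rfl

lemma ι_t : ι k m n hm hn i (BS.t (m i) (n i)) = ofA k m n hm hn i ((Aarc k m n hm hn i).gen 0) := by
  rw [genA_zero]
  show ofA k m n hm hn i (embA k m n hm hn i (eBS k m n i (BS.t (m i) (n i)))) = _
  rw [eBS_t]

lemma ι_a : ι k m n hm hn i (BS.a (m i) (n i)) = ofA k m n hm hn i ((Aarc k m n hm hn i).gen 1) := by
  rw [genA_one]
  show ofA k m n hm hn i (embA k m n hm hn i (eBS k m n i (BS.a (m i) (n i)))) = _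
  rw [eBS_a]

/-- the vertex elements of the total group: `vtx r` is the image of `a_{i+r}`. -/
noncomputable def vtx (r : ℕ) : Gtot k m n hm hn i :=
  if r ≤ 2 then ofA k m n hm hn i ((Aarc k m n hm hn i).gen r)
  else ofB k m n hm hn i ((Barc k m n hm hn i).gen (r - 2))

lemma vtx_le {r : ℕ} (h : r ≤ 2) :
    vtx k m n hm hn i r = ofA k m n hm hn i ((Aarc k m n hm hn i).gen r) := if_pos h

lemma vtx_ge (hk : 4 ≤ k) {r : ℕ} (h : 2 ≤ r) :
    vtx k m n hm hn i r = ofB k m n hm hn i ((Barc k m n hm hn i).gen (r - 2)) := by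
  rcases Nat.lt_or_ge 2 r with h2 | h2
  · exact if_neg (by omega)
  · have hr2 : r = 2 := by omega
    subst hr2
    rw [vtx_le k m n hm hn i le_rfl]
    have hglue := glue k m n hm hn i true
    simp only [Bool.not_true] at hglue
    have hA : HPack.ends 0 (PA k m n hm hn i) true = (Aarc k m n hm hn i).gen 2 := rfl
    have hB : HPack.ends (k - 4) (PB k m n hm hn i) false = (Barc k m n hm hn i).gen 0 := rfl
    rw [hA, hB] at hglue
    rw [hglue]

lemma vtx_zero_eq_B (hk : 4 ≤ k) :
    vtx k m n hm hn i 0 = ofB k m n hm hn i ((Barc k m n hm hn i).gen (k - 2)) := by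
  rw [vtx_le k m n hm hn i (by omega)]
  have hglue := glue k m n hm hn i false
  simp only [Bool.not_false] at hglue
  have hA : HPack.ends 0 (PA k m n hm hn i) false = (Aarc k m n hm hn i).gen 0 := rfl
  have hB : HPack.ends (k - 4) (PB k m n hm hn i) true =
      (Barc k m n hm hn i).gen (k - 4 + 2) := rfl
  rw [hA, hB] at hglue
  rw [hglue]
  have : k - 4 + 2 = k - 2 := by omega
  rw [this]

/-- pushing a Baumslag-Solitar relation through a homomorphism. -/
lemma push_rel {H K : Type*} [Group H] [Group K] (ψ : H →* K) {x y : H} {mm nn : ℤ}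
    (h : x * y ^ mm * x⁻¹ = y ^ nn) :
    ψ x * ψ y ^ mm * (ψ x)⁻¹ * (ψ y ^ nn)⁻¹ = 1 := by
  rw [mul_inv_eq_one, ← map_zpow, ← map_zpow, ← map_inv, ← map_mul, ← map_mul, h, map_zpow]

/-- the vertex assignment for the generators of the Higman group. -/
noncomputable def fHig (v : ZMod k) : Gtot k m n hm hn i :=
  vtx k m n hm hn i ((v - i).val)

lemma higRel_lift {G : Type*} [Group G] (f : ZMod k → G) (j : ZMod k) :
    FreeGroup.lift f (higRel k m n j) =
      f j * f (j + 1) ^ m j * (f j)⁻¹ * (f (j + 1) ^ n j)⁻¹ := by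
  rw [show higRel k m n j = FreeGroup.of j * FreeGroup.of (j + 1) ^ m j *
    (FreeGroup.of j)⁻¹ * (FreeGroup.of (j + 1) ^ n j)⁻¹ from rfl]
  simp only [map_mul, map_zpow, map_inv, FreeGroup.lift_apply_of]

lemma fHig_rel (hk : 4 ≤ k) (j : ZMod k) :
    FreeGroup.lift (fHig k m n hm hn i) (higRel k m n j) = 1 := by
  haveI : NeZero k := ⟨by omega⟩
  rw [higRel_lift]
  set r := ((j - i).val) with hrdef
  have hrk : r < k := ZMod.val_lt _
  have hj : j = i + (r : ZMod k) := by
    rw [hrdef, ZMod.natCast_rightInverse (j - i)]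
    ring
  have hfj : fHig k m n hm hn i j = vtx k m n hm hn i r := rfl
  rcases Nat.lt_or_ge r (k - 1) with hrlt | hrge
  · -- no wraparound
    have hfj1 : fHig k m n hm hn i (j + 1) = vtx k m n hm hn i (r + 1) := by
      show vtx k m n hm hn i ((j + 1 - i).val) = _
      have : j + 1 - i = ((r + 1 : ℕ) : ZMod k) := by
        rw [hj]
        push_cast
        ring
      rw [this, ZMod.val_cast_of_lt (by omega)]
    rw [hfj, hfj1]
    have hmj : m j = m (i + (r : ZMod k)) := by rw [← hj]
    have hnj : n j = n (i + (r : ZMod k)) := by rw [← hj]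
    rcases Nat.lt_or_ge 1 r with h1r | h1r
    · -- inside arc B
      rw [vtx_ge k m n hm hn i hk (by omega), vtx_ge k m n hm hn i hk (by omega)]
      have harith : (i + 2 + ((r - 2 : ℕ) : ZMod k)) = i + (r : ZMod k) := by
        have : ((r - 2 : ℕ) : ZMod k) = (r : ZMod k) - 2 := by
          push_cast [Nat.cast_sub (by omega : 2 ≤ r)]
          ring
        rw [this]
        ring
      have hmj' : m j = MB k m i (r - 2) := by rw [hmj, MB, harith]
      have hnj' : n j = NB k n i (r - 2) := by rw [hnj, NB, harith]
      have hidx : r + 1 - 2 = (r - 2) + 1 := by omega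
      rw [hidx, hmj', hnj']
      exact push_rel (ofB k m n hm hn i)
        ((Barc k m n hm hn i).rel (r - 2) (by omega))
    · -- inside arc A
      rw [vtx_le k m n hm hn i (by omega), vtx_le k m n hm hn i (by omega)]
      have hmj' : m j = MA k m i r := by rw [hmj]; rfl
      have hnj' : n j = NA k n i r := by rw [hnj]; rfl
      rw [hmj', hnj']
      exact push_rel (ofA k m n hm hn i)
        ((Aarc k m n hm hn i).rel r (by omega))
  · -- wraparound: r = k - 1
    have hr : r = k - 1 := by omega
    have hfj1 : fHig k m n hm hn i (j + 1) = vtx k m n hm hn i 0 := by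
      show vtx k m n hm hn i ((j + 1 - i).val) = _
      have : j + 1 - i = ((0 : ℕ) : ZMod k) := by
        rw [hj, hr]
        push_cast [Nat.cast_sub (by omega : 1 ≤ k)]
        rw [ZMod.natCast_self]
        ring
      rw [this, ZMod.val_cast_of_lt (by omega)]
    rw [hfj, hfj1, hr, vtx_ge k m n hm hn i hk (by omega), vtx_zero_eq_B k m n hm hn i hk]
    have hmj : m j = m (i + (r : ZMod k)) := by rw [← hj]
    have hnj : n j = n (i + (r : ZMod k)) := by rw [← hj]
    have harith : (i + 2 + ((k - 3 : ℕ) : ZMod k)) = i + ((k - 1 : ℕ) : ZMod k) := by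
      have h3 : ((k - 3 : ℕ) : ZMod k) = (k : ZMod k) - 3 := by
        push_cast [Nat.cast_sub (by omega : 3 ≤ k)]
        ring
      have h1 : ((k - 1 : ℕ) : ZMod k) = (k : ZMod k) - 1 := by
        push_cast [Nat.cast_sub (by omega : 1 ≤ k)]
        ring
      rw [h3, h1]
      ring
    have hmj' : m j = MB k m i (k - 3) := by rw [hmj, hr, MB, harith]
    have hnj' : n j = NB k n i (k - 3) := by rw [hnj, hr, NB, harith]
    have hidx1 : k - 1 - 2 = k - 3 := by omega
    have hidx2 : k - 2 = (k - 3) + 1 := by omega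
    rw [hidx1, hidx2, hmj', hnj']
    exact push_rel (ofB k m n hm hn i)
      ((Barc k m n hm hn i).rel (k - 3) (by omega))

/-- the homomorphism from the Higman group to the total group. -/
noncomputable def θ (hk : 4 ≤ k) : Hig k m n →* Gtot k m n hm hn i :=
  PresentedGroup.toGroup (f := fHig k m n hm hn i)
    (by rintro x ⟨j, rfl⟩; exact fHig_rel k m n hm hn i hk j)

@[simp] lemma θ_gen (hk : 4 ≤ k) (v : ZMod k) :
    θ k m n hm hn i hk (Hig.gen k m n v) = fHig k m n hm hn i v :=
  PresentedGroup.toGroup.of _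

end HigAux

end Assembly

theorem bs_to_hig_injective (k : ℕ) (hk : 4 ≤ k) (m n : ZMod k → ℤ)
    (hm : ∀ i, m i ≠ 0) (hn : ∀ i, n i ≠ 0) (hmn : ∀ i, |m i| < |n i|) (i : ZMod k) :
    ∃ f : BS (m i) (n i) →* Hig k m n,
      f (BS.t (m i) (n i)) = Hig.gen k m n i ∧
      f (BS.a (m i) (n i)) = Hig.gen k m n (i + 1) ∧
      Function.Injective f := by
  classical
  haveI : NeZero k := ⟨by omega⟩
  haveI : Fact (1 < k) := ⟨by omega⟩
  open HigAux in
  have hhig : Hig.gen k m n i * Hig.gen k m n (i+1) ^ m i * (Hig.gen k m n i)⁻¹ *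
      (Hig.gen k m n (i+1) ^ n i)⁻¹ = 1 := by
    have h : PresentedGroup.mk (Set.range (higRel k m n)) (higRel k m n i) = 1 :=
      PresentedGroup.mk_rel ⟨i, rfl⟩
    rw [← h]
    rw [show higRel k m n i = FreeGroup.of i * FreeGroup.of (i + 1) ^ m i *
      (FreeGroup.of i)⁻¹ * (FreeGroup.of (i + 1) ^ n i)⁻¹ from rfl]
    simp only [map_mul, map_zpow, map_inv]
    rfl
  have hrel : ∀ r ∈ ({bsRel (m i) (n i)} : Set (FreeGroup Bool)),
      FreeGroup.lift (fun b => if b then Hig.gen k m n i else Hig.gen k m n (i+1)) r = 1 := by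
    rintro r hr
    rw [Set.mem_singleton_iff] at hr
    subst hr
    rw [show bsRel (m i) (n i) = FreeGroup.of true * FreeGroup.of false ^ m i *
      (FreeGroup.of true)⁻¹ * (FreeGroup.of false ^ n i)⁻¹ from rfl]
    simp only [map_mul, map_zpow, map_inv, FreeGroup.lift_apply_of, eq_self_iff_true, if_true,
      Bool.false_eq_true, if_false]
    exact hhig
  set f : BS (m i) (n i) →* Hig k m n := PresentedGroup.toGroup hrel with hf
  have hft : f (BS.t (m i) (n i)) = Hig.gen k m n i := by
    rw [hf]
    show (PresentedGroup.toGroup hrel) (PresentedGroup.of true) = Hig.gen k m n i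
    have := PresentedGroup.toGroup.of hrel (x := true)
    simpa using this
  have hfa : f (BS.a (m i) (n i)) = Hig.gen k m n (i + 1) := by
    rw [hf]
    show (PresentedGroup.toGroup hrel) (PresentedGroup.of false) = Hig.gen k m n (i + 1)
    have := PresentedGroup.toGroup.of hrel (x := false)
    simpa using this
  refine ⟨f, hft, hfa, ?_⟩
  have hcomp : (HigAux.θ k m n hm hn i hk).comp f = HigAux.ι k m n hm hn i := by
    refine PresentedGroup.ext (fun b => ?_)
    cases b with
    | true =>
      show HigAux.θ k m n hm hn i hk (f (BS.t (m i) (n i))) = HigAux.ι k m n hm hn i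
        (BS.t (m i) (n i))
      rw [hft, HigAux.θ_gen, HigAux.ι_t]
      show HigAux.vtx k m n hm hn i ((i - i).val) = _
      rw [sub_self, ZMod.val_zero, HigAux.vtx_le k m n hm hn i (by omega)]
    | false =>
      show HigAux.θ k m n hm hn i hk (f (BS.a (m i) (n i))) = HigAux.ι k m n hm hn i
        (BS.a (m i) (n i))
      rw [hfa, HigAux.θ_gen, HigAux.ι_a]
      show HigAux.vtx k m n hm hn i ((i + 1 - i).val) = _
      rw [add_sub_cancel_left, ZMod.val_one, HigAux.vtx_le k m n hm hn i (by omega)]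
  have hinj : Function.Injective ((HigAux.θ k m n hm hn i hk).comp f) := by
    rw [hcomp]
    exact HigAux.ι_injective k m n hm hn i
  exact Function.Injective.of_comp hinj
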